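/- arXiv:2302.00977 — 3 statements merged into one kernel-verified Lean document; each statement's English description precedes it below -/
import Mathlib

section
/- In an associative algebra, suppose elements (organized into formal series) h(u) = 1 + Σ_{r≥1} h^{(r)} u^{-r} and e(v) = Σ_{r≥1} e^{(r)} v^{-r} satisfy the relation [h(u), e(v)] = h(u)·(e(u) - e(v))/(u - v) as formal series identities. Then setting v = u + 1 (with formal re-expansion) yields e(u+1)·h(u) = h(u)·e(u), and moreover e(v)·h(u)^{-1} = h(u)^{-1}·((u-v)/(u-v+1)·e(v) + 1/(u-v+1)·e(u+1)). -/
open Finset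

/-- Coefficient of `u^{-r} v^{-s}` in the divided difference `(g(u) - g(v))/(u - v)`
of a series `g(u) = Σ_{k≥1} g^{(k)} u^{-k}`. -/
noncomputable def dd {A : Type*} [Ring A] (g : ℕ → A) (r s : ℕ) : A :=
  if r = 0 ∨ s = 0 then 0 else -g (r + s - 1)

/-- Coefficient of `u^{-n}` in `g(u + q)`. -/
noncomputable def shiftC {A : Type*} [Ring A] [Algebra ℚ A] (q : ℚ) (g : ℕ → A) (n : ℕ) : A :=
  ∑ r ∈ range (n + 1),
    (((-1 : ℚ) ^ (n - r)) * ((n - 1).choose (n - r) : ℚ) * q ^ (n - r)) • g r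

/-- Coefficient of `u^{-n}` in the product of two one-variable series. -/
noncomputable def convo {A : Type*} [Ring A] (a b : ℕ → A) (n : ℕ) : A :=
  ∑ i ∈ range (n + 1), a i * b (n - i)

namespace Stmt2Aux

variable {A : Type*} [Ring A] [Algebra ℚ A]

/-- `Aa e m s = Σ_{x=1}^{m} (-1)^{m-x} C(m-1, m-x) • e_{x+s-1}` (index shifted by one). -/
noncomputable def Aa (e : ℕ → A) (m s : ℕ) : A :=
  ∑ x ∈ range m, (((-1 : ℚ) ^ (m - 1 - x)) * ((m - 1).choose (m - 1 - x) : ℚ)) • e (x + s)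

lemma Aa_zero (e : ℕ → A) (s : ℕ) : Aa e 0 s = 0 := by simp [Aa]

lemma Aa_one (e : ℕ → A) (s : ℕ) : Aa e 1 s = e s := by simp [Aa]

lemma Aa_succ' (e : ℕ → A) (m' s : ℕ) :
    Aa e (m' + 2) s = Aa e (m' + 1) (s + 1) - Aa e (m' + 1) s := by
  have h1 : Aa e (m' + 1) (s + 1)
      = ∑ x ∈ range (m' + 2), (if x = 0 then 0 else
          (((-1 : ℚ) ^ (m' + 1 - x)) * ((m').choose (m' + 1 - x) : ℚ)) • e (x + s)) := by
    rw [Finset.sum_range_succ']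
    norm_num
    unfold Aa
    apply Finset.sum_congr rfl
    intro x _
    have e1 : m' + 1 - 1 - x = m' - x := by omega
    have e2 : m' + 1 - (x + 1) = m' - x := by omega
    have e3 : x + (s + 1) = x + 1 + s := by omega
    rw [e1, e2, e3]
    norm_num
  have h2 : Aa e (m' + 1) s
      = ∑ x ∈ range (m' + 2), (if x = m' + 1 then 0 else
          (((-1 : ℚ) ^ (m' - x)) * ((m').choose (m' - x) : ℚ)) • e (x + s)) := by
    rw [Finset.sum_range_succ]
    norm_num
    unfold Aa
    apply Finset.sum_congr rfl
    intro x hx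
    rw [if_neg (by have := Finset.mem_range.mp hx; omega : x ≠ m' + 1)]
    have e1 : m' + 1 - 1 - x = m' - x := by omega
    rw [e1]
    norm_num
  rw [h1, h2, ← Finset.sum_sub_distrib]
  unfold Aa
  apply Finset.sum_congr rfl
  intro x hx
  have hxm : x ≤ m' + 1 := by have := Finset.mem_range.mp hx; omega
  have e1 : m' + 2 - 1 - x = m' + 1 - x := by omega
  have e0 : m' + 2 - 1 = m' + 1 := by omega
  rw [e1, e0]
  rcases Nat.eq_or_lt_of_le hxm with hxe | hxlt
  · subst hxe
    simp [Nat.sub_self]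
  · have hxle : x ≤ m' := by omega
    rw [if_neg (by omega : x ≠ m' + 1)]
    rcases Nat.eq_zero_or_pos x with rfl | hx1
    · rw [if_pos rfl, zero_sub, ← neg_smul]
      congr 1
      have e2 : m' + 1 - 0 = (m' - 0) + 1 := by omega
      rw [e2]
      simp [pow_succ]
    · rw [if_neg (by omega : x ≠ 0), ← sub_smul]
      congr 1
      obtain ⟨k, hk⟩ : ∃ k, m' - x = k := ⟨_, rfl⟩
      have e2 : m' + 1 - x = k + 1 := by omega
      have e3 : (m' + 1).choose (k + 1) = m'.choose k + m'.choose (k + 1) := by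
        have hmx : m' + 1 = (x + k) + 1 := by omega
        rw [hmx, Nat.choose_succ_succ]
        congr 2 <;> omega
      rw [e2, e3, hk]
      push_cast
      ring

/-- `Tt h e r s = Σ_{j=1}^{r} h_{r-j} e_{j+s-1}` (index shifted). -/
noncomputable def Tt (h e : ℕ → A) (r s : ℕ) : A :=
  ∑ j ∈ range r, h (r - 1 - j) * e (j + s)

/-- `Rr h e r s = Σ_{m=1}^{r} A_m(s) h_{r-m}` (index shifted). -/
noncomputable def Rr (h e : ℕ → A) (r s : ℕ) : A :=
  ∑ m ∈ range r, Aa e (m + 1) s * h (r - 1 - m)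

lemma Tt_succ (h e : ℕ → A) (r s : ℕ) :
    Tt h e (r + 1) s = Tt h e r (s + 1) + h r * e s := by
  unfold Tt
  rw [Finset.sum_range_succ']
  congr 1
  · apply Finset.sum_congr rfl
    intro j _
    have e1 : r + 1 - 1 - (j + 1) = r - 1 - j := by omega
    have e2 : j + 1 + s = j + (s + 1) := by omega
    rw [e1, e2]
  · norm_num

lemma Rr_succ (h e : ℕ → A) (r s : ℕ) :
    Rr h e (r + 1) s = Rr h e r (s + 1) - Rr h e r s + e s * h r := by
  unfold Rr
  rw [Finset.sum_range_succ']
  have e4 : ∀ m, r + 1 - 1 - (m + 1) = r - 1 - m := by intro m; omega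
  have h1 : ∀ m ∈ range r, Aa e (m + 1 + 1) s * h (r + 1 - 1 - (m + 1))
      = Aa e (m + 1) (s + 1) * h (r - 1 - m) - Aa e (m + 1) s * h (r - 1 - m) := by
    intro m _
    rw [e4, Aa_succ' e m s, sub_mul]
  rw [Finset.sum_congr rfl h1, Finset.sum_sub_distrib]
  simp [Aa_one]

lemma star (h e : ℕ → A)
    (rel : ∀ r s, h r * e s - e s * h r
      = ∑ i ∈ range (r + 1), h i * dd e (r - i) s) :
    ∀ r s, 1 ≤ s → h r * e s = e s * h r - Tt h e r s := by
  intro r s hs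
  have h1 : ∑ i ∈ range (r + 1), h i * dd e (r - i) s = -Tt h e r s := by
    rw [Finset.sum_range_succ]
    have h2 : dd e (r - r) s = 0 := by simp [dd]
    rw [h2, mul_zero, add_zero]
    have h3 : ∀ i ∈ range r, h i * dd e (r - i) s = -(h i * e (r - i + s - 1)) := by
      intro i hi
      have hir : i < r := Finset.mem_range.mp hi
      rw [dd, if_neg (by omega), mul_neg]
    rw [Finset.sum_congr rfl h3, Finset.sum_neg_distrib]
    congr 1
    unfold Tt
    rw [← Finset.sum_range_reflect]
    apply Finset.sum_congr rfl
    intro j hj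
    have hjr : j < r := Finset.mem_range.mp hj
    have e2 : r - (r - 1 - j) + s - 1 = j + s := by omega
    rw [e2]
  have h4 := rel r s
  rw [h1, sub_eq_iff_eq_add] at h4
  rw [h4, neg_add_eq_sub]

lemma TR (h e : ℕ → A)
    (rel : ∀ r s, h r * e s - e s * h r
      = ∑ i ∈ range (r + 1), h i * dd e (r - i) s) :
    ∀ r s, 1 ≤ s → Tt h e r s = Rr h e r s := by
  intro r
  induction r with
  | zero => intro s _; simp [Tt, Rr]
  | succ r ih =>
    intro s hs
    rw [Tt_succ, Rr_succ]
    rw [star h e rel r s hs, ih (s + 1) (by omega), ih s hs]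
    abel

lemma shift_dd (e : ℕ → A) (a s : ℕ) (hs : 1 ≤ s) :
    shiftC 1 (fun t => dd e t s) a = -Aa e a s := by
  unfold shiftC
  rw [Finset.sum_range_succ']
  have h0 : dd e 0 s = 0 := by simp [dd]
  simp only [h0, smul_zero, add_zero, one_pow, mul_one]
  have h1 : ∀ x ∈ range a,
      (((-1 : ℚ) ^ (a - (x + 1))) * ((a - 1).choose (a - (x + 1)) : ℚ))
        • dd e (x + 1) s
      = -((((-1 : ℚ) ^ (a - 1 - x)) * ((a - 1).choose (a - 1 - x) : ℚ)) • e (x + s)) := by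
    intro x _
    have e1 : a - (x + 1) = a - 1 - x := by omega
    have e3 : x + 1 + s - 1 = x + s := by omega
    have e2 : dd e (x + 1) s = -e (x + s) := by
      rw [dd, if_neg (by omega), e3]
    rw [e1, e2, smul_neg]
  rw [Finset.sum_congr rfl h1, Finset.sum_neg_distrib]
  simp [Aa]

lemma shift_dd0 (e : ℕ → A) (a : ℕ) :
    shiftC 1 (fun t => dd e t 0) a = 0 := by
  simp [shiftC, dd]

lemma key (h e : ℕ → A) (he0 : e 0 = 0)
    (rel : ∀ r s, h r * e s - e s * h r
      = ∑ i ∈ range (r + 1), h i * dd e (r - i) s) :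
    ∀ r s, h r * e s = ∑ a ∈ range (r + 1),
      ((if a = 0 then e s else 0) + shiftC 1 (fun t => dd e t s) a) * h (r - a) := by
  intro r s
  rcases Nat.eq_zero_or_pos s with rfl | hs
  · rw [he0, mul_zero]
    symm
    apply Finset.sum_eq_zero
    intro a _
    simp [shift_dd0, he0]
  · have h1 : ∀ a ∈ range (r + 1),
        ((if a = 0 then e s else 0) + shiftC 1 (fun t => dd e t s) a) * h (r - a)
        = (if a = 0 then e s * h r else 0) + -(Aa e a s * h (r - a)) := by
      intro a _
      rw [shift_dd e a s hs, add_mul, neg_mul]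
      congr 1
      rcases Nat.eq_zero_or_pos a with rfl | ha
      · simp
      · rw [if_neg (by omega), if_neg (by omega), zero_mul]
    rw [Finset.sum_congr rfl h1, Finset.sum_add_distrib]
    have h2 : ∑ a ∈ range (r + 1), (if a = 0 then e s * h r else 0) = e s * h r := by
      rw [Finset.sum_ite_eq' (range (r + 1)) 0 (fun _ => e s * h r)]
      simp
    have h3 : ∑ a ∈ range (r + 1), -(Aa e a s * h (r - a)) = -Rr h e r s := by
      rw [Finset.sum_neg_distrib]
      congr 1
      rw [Finset.sum_range_succ']
      rw [Aa_zero, zero_mul, add_zero]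
      unfold Rr
      apply Finset.sum_congr rfl
      intro m _
      congr 2
      omega
    rw [h2, h3, star h e rel r s hs, TR h e rel r s hs]
    abel

end Stmt2Aux

open Stmt2Aux PowerSeries in
/-- In an associative ℚ-algebra, if `h(u) = 1 + Σ_{r≥1} h^{(r)} u^{-r}`
(with inverse `h(u)^{-1}` encoded by `hinv`) and `e(v) = Σ_{r≥1} e^{(r)} v^{-r}`
satisfy `[h(u), e(v)] = h(u)·(e(u) - e(v))/(u - v)`, then
`e(u+1)·h(u) = h(u)·e(u)`, and
`e(v)·h(u)^{-1} = h(u)^{-1}·( (u-v)/(u-v+1)·e(v) + 1/(u-v+1)·e(u+1) )`; the right-hand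
side of the latter is the series
`h(u)^{-1}·( e(v) + (e(u+1) - e(v))/((u+1) - v) )`, whose coefficients are written
below via `dd` and the substitution `u ↦ u+1`. -/
theorem stmt2 {A : Type*} [Ring A] [Algebra ℚ A]
    (h e hinv : ℕ → A) (hh0 : h 0 = 1) (he0 : e 0 = 0)
    (hinv1 : ∀ n, convo h hinv n = if n = 0 then 1 else 0)
    (hinv2 : ∀ n, convo hinv h n = if n = 0 then 1 else 0)
    (rel : ∀ r s, h r * e s - e s * h r
      = ∑ i ∈ range (r + 1), h i * dd e (r - i) s) :
    (∀ n, convo (shiftC 1 e) h n = convo h e n) ∧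
    (∀ r s, e s * hinv r
      = ∑ i ∈ range (r + 1), hinv i *
          ((if r - i = 0 then e s else 0) + shiftC 1 (fun a => dd e a s) (r - i))) := by
  constructor
  · -- part 1
    intro n
    have hAe : ∀ a, shiftC (1:ℚ) e a = Aa e a 1 := by
      intro a
      unfold shiftC
      rw [Finset.sum_range_succ']
      have h0 : (((-1 : ℚ) ^ (a - 0)) * ((a - 1).choose (a - 0) : ℚ) * (1:ℚ) ^ (a - 0)) • e 0
          = 0 := by rw [he0, smul_zero]
      rw [h0, add_zero]
      unfold Aa
      apply Finset.sum_congr rfl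
      intro x _
      have e1 : a - (x + 1) = a - 1 - x := by omega
      rw [e1, one_pow, mul_one]
    have hL : convo (shiftC 1 e) h n = Rr h e n 1 := by
      unfold convo
      rw [Finset.sum_range_succ']
      have h0 : shiftC (1:ℚ) e 0 * h (n - 0) = 0 := by
        rw [hAe, Aa_zero, zero_mul]
      rw [h0, add_zero]
      unfold Rr
      apply Finset.sum_congr rfl
      intro a _
      rw [hAe]
      congr 2
      omega
    have hR : convo h e n = Tt h e n 1 := by
      unfold convo
      rw [Finset.sum_range_succ]
      have h0 : h n * e (n - n) = 0 := by
        rw [Nat.sub_self, he0, mul_zero]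
      rw [h0, add_zero]
      unfold Tt
      rw [← Finset.sum_range_reflect]
      apply Finset.sum_congr rfl
      intro j hj
      have hjn : j < n := Finset.mem_range.mp hj
      have e2 : n - (n - 1 - j) = j + 1 := by omega
      rw [e2]
    rw [hL, hR, TR h e rel n 1 (by omega)]
  · -- part 2
    intro r s
    set H : PowerSeries A := PowerSeries.mk h with hH
    set K : PowerSeries A := PowerSeries.mk hinv with hK
    set X : PowerSeries A := PowerSeries.mk
      (fun a => (if a = 0 then e s else 0) + shiftC 1 (fun t => dd e t s) a) with hX
    have hHK : H * K = 1 := by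
      ext n
      rw [PowerSeries.coeff_mul, Finset.Nat.sum_antidiagonal_eq_sum_range_succ_mk,
        PowerSeries.coeff_one]
      simpa [hH, hK, PowerSeries.coeff_mk, convo] using hinv1 n
    have hKH : K * H = 1 := by
      ext n
      rw [PowerSeries.coeff_mul, Finset.Nat.sum_antidiagonal_eq_sum_range_succ_mk,
        PowerSeries.coeff_one]
      simpa [hH, hK, PowerSeries.coeff_mk, convo] using hinv2 n
    have hHE : H * (PowerSeries.C (e s)) = X * H := by
      ext n
      rw [PowerSeries.coeff_mul_C, PowerSeries.coeff_mul,
        Finset.Nat.sum_antidiagonal_eq_sum_range_succ_mk]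
      simp only [hH, hX, PowerSeries.coeff_mk]
      exact key h e he0 rel n s
    have hfin : (PowerSeries.C (e s)) * K = K * X := by
      have e1 : H * ((PowerSeries.C (e s)) * K) = X := by
        rw [← mul_assoc, hHE, mul_assoc, hHK, mul_one]
      calc (PowerSeries.C (e s)) * K
          = (K * H) * ((PowerSeries.C (e s)) * K) := by rw [hKH, one_mul]
        _ = K * (H * ((PowerSeries.C (e s)) * K)) := by rw [mul_assoc]
        _ = K * X := by rw [e1]
    have := congrArg (PowerSeries.coeff r) hfin
    rw [PowerSeries.coeff_mul, PowerSeries.coeff_mul,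
      Finset.Nat.sum_antidiagonal_eq_sum_range_succ_mk,
      Finset.Nat.sum_antidiagonal_eq_sum_range_succ_mk] at this
    simp only [hK, hX, PowerSeries.coeff_mk, PowerSeries.coeff_C] at this
    have hL : ∑ k ∈ range (r + 1), (if k = 0 then e s else 0) * hinv (r - k)
        = e s * hinv r := by
      rw [Finset.sum_eq_single_of_mem 0 (by simp)]
      · simp
      · intro b _ hb
        rw [if_neg hb, zero_mul]
    rw [hL] at this
    exact this
end

section
/- Let A be an associative algebra and h₁(u), e(u) formal series over A satisfying [h₁(u), e(v)] = h₁(u)(e(u)-e(v))/(u-v), and suppose h₂(u) = z(u)·h₁(u-1/2)·h₁(u-1)^{-1} where z(u) is a formal series with coefficients central in A. Then [h₂(u), e(v)] = h₂(u)·((e(u)-e(v))/(u-v) - (e(u-1/2)-e(v))/(u-v-1/2)). -/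
open Finset

namespace Stmt3Aux

open PowerSeries

/-! ### Summation helpers -/

lemma tri {M : Type*} [AddCommMonoid M] (F : ℕ → ℕ → M) (N : ℕ) :
    ∑ m ∈ range N, ∑ p ∈ range (m+1), F p (m - p)
      = ∑ p ∈ range N, ∑ r ∈ range (N - p), F p r := by
  induction N with
  | zero => simp
  | succ N ih =>
    rw [sum_range_succ, ih]
    have h1 : ∀ p ∈ range (N+1), ∑ r ∈ range (N+1-p), F p r
        = ∑ r ∈ range (N-p), F p r + F p (N-p) := by
      intro p hp
      have : N+1-p = (N-p)+1 := by
        simp at hp; omega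
      rw [this, sum_range_succ]
    rw [sum_congr rfl h1, sum_add_distrib, sum_range_succ (fun p => ∑ r ∈ range (N-p), F p r)]
    simp [add_comm, add_assoc, add_left_comm]

lemma swapTri {M : Type*} [AddCommMonoid M] (F : ℕ → ℕ → M) (N : ℕ) :
    ∑ m ∈ range N, ∑ a ∈ range (N - m), F m a
      = ∑ a ∈ range N, ∑ m ∈ range (N - a), F m a := by
  rw [← tri F N, ← tri (fun a m => F m a) N]
  apply sum_congr rfl
  intro m _
  rw [← sum_range_reflect]
  apply sum_congr rfl
  intro p hp
  simp at hp
  congr 1 <;> omega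

lemma sum_range_extend {M : Type*} [AddCommMonoid M] (f : ℕ → M) (a b : ℕ) (hab : a ≤ b)
    (hf : ∀ i, a ≤ i → f i = 0) :
    ∑ i ∈ range a, f i = ∑ i ∈ range b, f i := by
  refine sum_subset (range_subset_range.2 hab) (fun x _ hnx => hf x ?_)
  simpa using hnx

/-! ### Scalar power series over ℚ -/

lemma hockey (K m : ℕ) : ∑ a ∈ range (m+1), (K + a - 1).choose a = (K + m).choose m := by
  induction m with
  | zero => simp
  | succ m ih =>
    rw [sum_range_succ, ih, show K + (m+1) - 1 = K + m by omega, show K + (m+1) = (K+m)+1 by omega,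
      Nat.choose_succ_succ]

noncomputable def fs (c : ℚ) : PowerSeries ℚ := PowerSeries.mk fun k => c ^ k

noncomputable def G (c : ℚ) : PowerSeries ℚ := fs c * X

noncomputable def w (c : ℚ) (K n : ℕ) : ℚ :=
  if K ≤ n then ((n-1).choose (n-K) : ℚ) * c^(n-K) else 0

lemma coeff_fs_pow (c : ℚ) (K m : ℕ) :
    coeff (R := ℚ) m (fs c ^ K) = ((K + m - 1).choose m : ℚ) * c ^ m := by
  induction K generalizing m with
  | zero =>
    simp only [pow_zero, coeff_one]
    rcases Nat.eq_zero_or_pos m with h | h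
    · simp [h]
    · rw [if_neg (by omega), Nat.choose_eq_zero_of_lt (by omega)]
      simp
  | succ K ih =>
    rw [pow_succ, coeff_mul, Finset.Nat.sum_antidiagonal_eq_sum_range_succ_mk]
    have h1 : ∀ i ∈ range (m+1), coeff (R := ℚ) i (fs c ^ K) * coeff (R := ℚ) (m-i) (fs c)
        = ((K + i - 1).choose i : ℚ) * c ^ m := by
      intro i hi
      simp only [mem_range] at hi
      rw [ih, fs, coeff_mk, mul_assoc, ← pow_add, show i + (m - i) = m by omega]
    rw [sum_congr rfl h1, ← sum_mul]
    have h2 : ∑ i ∈ range (m+1), ((K + i - 1).choose i : ℚ) = ((K + m).choose m : ℚ) := by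
      rw [← Nat.cast_sum, hockey K m]
    rw [h2, show K + 1 + m - 1 = K + m by omega]

lemma w_eq (c : ℚ) (K n : ℕ) : coeff (R := ℚ) n (G c ^ K) = w c K n := by
  rw [G, mul_pow, coeff_mul_X_pow', w]
  split_ifs with h
  · rw [coeff_fs_pow, show K + (n - K) - 1 = n - 1 by omega]
  · rfl

lemma w_zero (c : ℚ) {K n : ℕ} (h : n < K) : w c K n = 0 := by
  rw [w, if_neg (by omega)]

lemma fs_inv (c : ℚ) : (1 - C (R := ℚ) c * X) * fs c = 1 := by
  ext n
  rw [sub_mul, one_mul, map_sub, mul_assoc, coeff_C_mul]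
  cases n with
  | zero => simp [fs]
  | succ n => simp [fs, coeff_succ_X_mul, pow_succ, mul_comm, coeff_one]

lemma res (a b : ℚ) : G a - G b = (C (R := ℚ) a - C (R := ℚ) b) * (G a * G b) := by
  have ha := fs_inv a
  have hb := fs_inv b
  simp only [G]
  linear_combination (X * fs b) * ha - (X * fs a) * hb

lemma geomA (n : ℕ) :
    ∑ r ∈ range n, G 0 ^ (r+1) * G 1 ^ (n-r) = G 1 ^ n - G 0 ^ n := by
  induction n with
  | zero => simp
  | succ n ih =>
    rw [sum_range_succ]
    have h1 : ∀ r ∈ range n, G 0 ^ (r+1) * G 1 ^ (n+1-r) = (G 0 ^ (r+1) * G 1 ^ (n-r)) * G 1 := by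
      intro r hr
      simp only [mem_range] at hr
      rw [show n+1-r = (n-r)+1 by omega, pow_succ]
      ring
    rw [sum_congr rfl h1, ← sum_mul, ih, show n+1-n = 1 by omega, pow_one]
    have h01 := res 0 1
    simp only [map_zero, map_one, zero_sub] at h01
    linear_combination (G 0 ^ n) * h01

lemma geomB (n : ℕ) :
    ∑ r ∈ range n, G (1/2) ^ (r+1) * G 1 ^ (n-r)
      = (2 : ℚ⟦X⟧) * (G 1 ^ n - G (1/2) ^ n) := by
  induction n with
  | zero => simp
  | succ n ih =>
    rw [sum_range_succ]
    have h1 : ∀ r ∈ range n, G (1/2) ^ (r+1) * G 1 ^ (n+1-r)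
        = (G (1/2) ^ (r+1) * G 1 ^ (n-r)) * G 1 := by
      intro r hr
      simp only [mem_range] at hr
      rw [show n+1-r = (n-r)+1 by omega, pow_succ]
      ring
    rw [sum_congr rfl h1, ← sum_mul, ih, show n+1-n = 1 by omega, pow_one]
    have h2 := res (1/2) 1
    have hhalf : (2 : ℚ⟦X⟧) * (C (R := ℚ) (1/2 : ℚ)) = 1 := by
      rw [show (2 : ℚ⟦X⟧) = C (R := ℚ) 2 by simp [map_ofNat], ← map_mul]
      norm_num
    rw [map_one] at h2
    linear_combination (2 * G (1/2)^n) * h2 + (G (1/2)^(n+1) * G 1) * hhalf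

lemma Eprime (K : ℕ) :
    ∑ r ∈ range (K+1), (G 0 ^ (r+1) - G (1/2) ^ (r+1)) * G 1 ^ (K - r + 1)
      = C (R := ℚ) 2 * G (1/2) ^ (K+1) - G 1 ^ (K+1) - G 0 ^ (K+1) := by
  rw [show (C (R := ℚ) 2 : ℚ⟦X⟧) = 2 by simp [map_ofNat]]
  have h1 : ∀ r ∈ range (K+1), (G 0 ^ (r+1) - G (1/2) ^ (r+1)) * G 1 ^ (K - r + 1)
      = G 0 ^ (r+1) * G 1 ^ ((K+1) - r) - G (1/2) ^ (r+1) * G 1 ^ ((K+1) - r) := by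
    intro r hr
    simp only [mem_range] at hr
    rw [show K - r + 1 = (K+1) - r by omega, sub_mul]
  rw [sum_congr rfl h1, sum_sub_distrib, geomA, geomB]
  ring

lemma coeff_mul_range {A : Type*} [Ring A] (φ ψ : PowerSeries A) (n : ℕ) :
    coeff (R := A) n (φ * ψ) = ∑ i ∈ range (n+1), coeff (R := A) i φ * coeff (R := A) (n-i) ψ := by
  rw [coeff_mul, Finset.Nat.sum_antidiagonal_eq_sum_range_succ_mk]

lemma coeffGG (a b : ℚ) (i j n : ℕ) :
    coeff (R := ℚ) n (G a ^ i * G b ^ j) = ∑ m ∈ range (n+1), w a i m * w b j (n-m) := by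
  rw [coeff_mul_range]
  exact sum_congr rfl fun m _ => by rw [w_eq, w_eq]

lemma wsum (c : ℚ) (p r n : ℕ) :
    ∑ i ∈ range (n+1), w c p i * w c r (n-i) = w c (p+r) n := by
  rw [← coeffGG, ← pow_add, w_eq]

lemma GGzero (a b : ℚ) {i j n : ℕ} (h : n < i + j) :
    coeff (R := ℚ) n (G a ^ i * G b ^ j) = 0 := by
  rw [coeffGG]
  refine sum_eq_zero fun m hm => ?_
  simp only [mem_range] at hm
  rcases le_or_gt i m with h1 | h1
  · rw [w_zero b (by omega), mul_zero]
  · rw [w_zero a h1, zero_mul]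

/-! ### The shift operator on `PowerSeries A` -/

variable {A : Type*} [Ring A] [Algebra ℚ A]

noncomputable def Sh (q : ℚ) (φ : PowerSeries A) : PowerSeries A :=
  PowerSeries.mk fun n => ∑ p ∈ range (n+1), w (-q) p n • coeff (R := A) p φ

lemma Sh_mk (q : ℚ) (g : ℕ → A) : Sh q (PowerSeries.mk g) = PowerSeries.mk (shiftC q g) := by
  ext n
  rw [Sh, coeff_mk, coeff_mk, shiftC]
  refine sum_congr rfl fun p hp => ?_
  simp only [mem_range] at hp
  rw [coeff_mk, w, if_pos (by omega)]
  congr 1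
  rw [neg_pow]
  ring

lemma smulmul (c d : ℚ) (x y : A) : (c • x) * (d • y) = (c * d) • (x * y) := by
  rw [smul_mul_assoc, mul_smul_comm, smul_smul]

lemma Sh_sub (q : ℚ) (φ ψ : PowerSeries A) : Sh q (φ - ψ) = Sh q φ - Sh q ψ := by
  ext n
  simp [Sh, smul_sub, sum_sub_distrib]

lemma Sh_C (q : ℚ) (a : A) : Sh q (C (R := A) a) = C (R := A) a := by
  ext n
  rw [Sh, coeff_mk]
  rw [sum_eq_single 0]
  · simp only [coeff_zero_eq_constantCoeff, constantCoeff_C]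
    rw [w, if_pos (Nat.zero_le n), coeff_C]
    rcases Nat.eq_zero_or_pos n with h | h
    · simp [h]
    · rw [Nat.choose_eq_zero_of_lt (by omega)]
      simp [if_neg (by omega : ¬ n = 0)]
  · intro p _ hp
    rw [coeff_C, if_neg hp, smul_zero]
  · intro h
    simp at h

lemma Sh_one (q : ℚ) : Sh q (1 : PowerSeries A) = 1 := by
  rw [show (1 : PowerSeries A) = C (R := A) 1 by simp, Sh_C]

lemma Sh_mul (q : ℚ) (φ ψ : PowerSeries A) : Sh q (φ * ψ) = Sh q φ * Sh q ψ := by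
  ext n
  have lhs_eq : coeff (R := A) n (Sh q (φ * ψ))
      = ∑ p ∈ range (n+1), ∑ r ∈ range (n+1),
          w (-q) (p+r) n • (coeff (R := A) p φ * coeff (R := A) r ψ) := by
    rw [Sh, coeff_mk]
    have h1 : ∀ m ∈ range (n+1), w (-q) m n • coeff (R := A) m (φ * ψ)
        = ∑ p ∈ range (m+1), w (-q) (p + (m-p)) n • (coeff (R := A) p φ * coeff (R := A) (m-p) ψ) := by
      intro m hm
      rw [coeff_mul_range, smul_sum]
      refine sum_congr rfl fun p hp => ?_
      simp only [mem_range] at hp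
      rw [show p + (m-p) = m by omega]
    rw [sum_congr rfl h1,
      tri (fun p r => w (-q) (p+r) n • (coeff (R := A) p φ * coeff (R := A) r ψ)) (n+1)]
    refine sum_congr rfl fun p hp => ?_
    simp only [mem_range] at hp
    refine sum_range_extend _ _ _ (by omega) fun r hr => ?_
    rw [w_zero _ (by omega), zero_smul]
  have rhs_eq : coeff (R := A) n (Sh q φ * Sh q ψ)
      = ∑ p ∈ range (n+1), ∑ r ∈ range (n+1),
          w (-q) (p+r) n • (coeff (R := A) p φ * coeff (R := A) r ψ) := by
    rw [coeff_mul_range]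
    have hR : ∀ i ∈ range (n+1),
        coeff (R := A) i (Sh q φ) * coeff (R := A) (n-i) (Sh q ψ)
          = ∑ p ∈ range (n+1), ∑ r ∈ range (n+1),
              (w (-q) p i * w (-q) r (n-i)) • (coeff (R := A) p φ * coeff (R := A) r ψ) := by
      intro i hi
      simp only [mem_range] at hi
      rw [Sh, Sh, coeff_mk, coeff_mk, sum_mul]
      have h2 : ∀ p ∈ range (i+1), (w (-q) p i • coeff (R := A) p φ) *
            (∑ r ∈ range (n-i+1), w (-q) r (n-i) • coeff (R := A) r ψ)
          = ∑ r ∈ range (n+1), (w (-q) p i * w (-q) r (n-i)) • (coeff (R := A) p φ * coeff (R := A) r ψ) := by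
        intro p _
        rw [mul_sum]
        have h3 : ∀ r ∈ range (n-i+1), (w (-q) p i • coeff (R := A) p φ) * (w (-q) r (n-i) • coeff (R := A) r ψ)
            = (w (-q) p i * w (-q) r (n-i)) • (coeff (R := A) p φ * coeff (R := A) r ψ) :=
          fun r _ => smulmul _ _ _ _
        rw [sum_congr rfl h3]
        refine sum_range_extend _ _ _ (by omega) fun r hr => ?_
        rw [w_zero (-q) (show n-i < r by omega), mul_zero, zero_smul]
      rw [sum_congr rfl h2]
      refine sum_range_extend _ _ _ (by omega) fun p hp => ?_
      refine sum_eq_zero fun r _ => ?_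
      rw [w_zero (-q) (show i < p by omega), zero_mul, zero_smul]
    calc ∑ i ∈ range (n+1), coeff (R := A) i (Sh q φ) * coeff (R := A) (n-i) (Sh q ψ)
        = ∑ i ∈ range (n+1), ∑ p ∈ range (n+1), ∑ r ∈ range (n+1),
            (w (-q) p i * w (-q) r (n-i)) • (coeff (R := A) p φ * coeff (R := A) r ψ) := sum_congr rfl hR
      _ = ∑ p ∈ range (n+1), ∑ i ∈ range (n+1), ∑ r ∈ range (n+1),
            (w (-q) p i * w (-q) r (n-i)) • (coeff (R := A) p φ * coeff (R := A) r ψ) := sum_comm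
      _ = ∑ p ∈ range (n+1), ∑ r ∈ range (n+1), ∑ i ∈ range (n+1),
            (w (-q) p i * w (-q) r (n-i)) • (coeff (R := A) p φ * coeff (R := A) r ψ) :=
          sum_congr rfl fun p _ => sum_comm
      _ = ∑ p ∈ range (n+1), ∑ r ∈ range (n+1),
            w (-q) (p+r) n • (coeff (R := A) p φ * coeff (R := A) r ψ) := by
          refine sum_congr rfl fun p _ => sum_congr rfl fun r _ => ?_
          rw [← sum_smul, wsum (-q) p r n]
  rw [lhs_eq, rhs_eq]

lemma coeff_comm (Xs : PowerSeries A) (a : A) (DDk : PowerSeries A)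
    (h : Xs * C (R := A) a - C (R := A) a * Xs = Xs * DDk) (i : ℕ) :
    coeff (R := A) i Xs * a - a * coeff (R := A) i Xs = coeff (R := A) i (Xs * DDk) := by
  have := congrArg (coeff (R := A) i) h
  simpa using this

lemma commGen (Xs : PowerSeries A) (E : ℕ → A) (DD : ℕ → PowerSeries A) (g : ℕ → ℕ → ℚ)
    (hrel : ∀ k, Xs * C (R := A) (E k) - C (R := A) (E k) * Xs = Xs * DD k) :
    Xs * PowerSeries.mk (fun j => ∑ m ∈ range (j+1), ∑ r ∈ range m, g m r • coeff (R := A) (j-m) (DD r))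
      = Xs * PowerSeries.mk (fun n => ∑ r ∈ range n, g n r • E r)
        - PowerSeries.mk (fun n => ∑ r ∈ range n, g n r • E r) * Xs := by
  ext n
  rw [map_sub]
  have lhs_eq : coeff (R := A) n (Xs * PowerSeries.mk
        (fun j => ∑ m ∈ range (j+1), ∑ r ∈ range m, g m r • coeff (R := A) (j-m) (DD r)))
      = ∑ a ∈ range (n+1), ∑ m ∈ range (n+1-a), ∑ r ∈ range m,
          g m r • (coeff (R := A) a Xs * coeff (R := A) (n-a-m) (DD r)) := by
    rw [coeff_mul_range]
    refine sum_congr rfl fun a ha => ?_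
    simp only [mem_range] at ha
    rw [coeff_mk, mul_sum, show (n-a)+1 = n+1-a by omega]
    refine sum_congr rfl fun m hm => ?_
    rw [mul_sum]
    refine sum_congr rfl fun r hr => ?_
    rw [mul_smul_comm]
  have rhs_eq : coeff (R := A) n (Xs * PowerSeries.mk (fun n => ∑ r ∈ range n, g n r • E r))
        - coeff (R := A) n (PowerSeries.mk (fun n => ∑ r ∈ range n, g n r • E r) * Xs)
      = ∑ a ∈ range (n+1), ∑ m ∈ range (n+1-a), ∑ r ∈ range m,
          g m r • (coeff (R := A) a Xs * coeff (R := A) (n-a-m) (DD r)) := by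
    rw [coeff_mul_range, coeff_mul_range]
    have refl1 : ∑ i ∈ range (n+1),
          coeff (R := A) i (PowerSeries.mk (fun n => ∑ r ∈ range n, g n r • E r)) * coeff (R := A) (n-i) Xs
        = ∑ i ∈ range (n+1),
          coeff (R := A) (n-i) (PowerSeries.mk (fun n => ∑ r ∈ range n, g n r • E r)) * coeff (R := A) i Xs := by
      rw [← Finset.sum_range_reflect]
      refine sum_congr rfl fun i hi => ?_
      simp only [mem_range] at hi
      rw [show n+1-1-i = n-i by omega, show n-(n-i) = i by omega]
    rw [refl1, ← sum_sub_distrib]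
    have step1 : ∀ i ∈ range (n+1),
        coeff (R := A) i Xs * coeff (R := A) (n-i) (PowerSeries.mk (fun n => ∑ r ∈ range n, g n r • E r))
          - coeff (R := A) (n-i) (PowerSeries.mk (fun n => ∑ r ∈ range n, g n r • E r)) * coeff (R := A) i Xs
        = ∑ r ∈ range (n-i), ∑ a ∈ range (i+1),
            g (n-i) r • (coeff (R := A) a Xs * coeff (R := A) (i-a) (DD r)) := by
      intro i hi
      rw [coeff_mk, mul_sum, sum_mul, ← sum_sub_distrib]
      refine sum_congr rfl fun r hr => ?_
      rw [mul_smul_comm, smul_mul_assoc, ← smul_sub,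
        coeff_comm Xs (E r) (DD r) (hrel r) i, coeff_mul_range, smul_sum]
    rw [sum_congr rfl step1]
    have refl2 : ∑ i ∈ range (n+1), ∑ r ∈ range (n-i), ∑ a ∈ range (i+1),
          g (n-i) r • (coeff (R := A) a Xs * coeff (R := A) (i-a) (DD r))
        = ∑ m ∈ range (n+1), ∑ r ∈ range m, ∑ a ∈ range (n+1-m),
          g m r • (coeff (R := A) a Xs * coeff (R := A) (n-m-a) (DD r)) := by
      rw [← Finset.sum_range_reflect]
      refine sum_congr rfl fun m hm => ?_
      simp only [mem_range] at hm
      rw [show n+1-1-m = n-m by omega, show n - (n-m) = m by omega,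
        show (n-m)+1 = n+1-m by omega]
    rw [refl2]
    have swap1 : ∀ m ∈ range (n+1), ∑ r ∈ range m, ∑ a ∈ range (n+1-m),
          g m r • (coeff (R := A) a Xs * coeff (R := A) (n-m-a) (DD r))
        = ∑ a ∈ range (n+1-m), ∑ r ∈ range m,
          g m r • (coeff (R := A) a Xs * coeff (R := A) (n-m-a) (DD r)) := fun m _ => sum_comm
    rw [sum_congr rfl swap1,
      swapTri (fun m a => ∑ r ∈ range m, g m r • (coeff (R := A) a Xs * coeff (R := A) (n-m-a) (DD r))) (n+1)]
    refine sum_congr rfl fun a ha => sum_congr rfl fun m hm => sum_congr rfl fun r hr => ?_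
    rw [show n-m-a = n-a-m by omega]
  rw [lhs_eq, rhs_eq]

lemma qdiff (E : ℕ → A) (n : ℕ) :
    ∑ m ∈ range (n+1), ∑ r ∈ range m, ∑ p ∈ range (n-m),
        ((w 0 (r+1) m - w (1/2) (r+1) m) * w 1 (p+1) (n-m)) • E (r+p)
      = ∑ K ∈ range n, (2 * w (1/2) (K+1) n - w 1 (K+1) n - w 0 (K+1) n) • E K := by
  have lhs_eq : ∑ m ∈ range (n+1), ∑ r ∈ range m, ∑ p ∈ range (n-m),
        ((w 0 (r+1) m - w (1/2) (r+1) m) * w 1 (p+1) (n-m)) • E (r+p)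
      = ∑ r ∈ range n, ∑ p ∈ range n,
          (coeff (R := ℚ) n (G 0 ^ (r+1) * G 1 ^ (p+1))
            - coeff (R := ℚ) n (G (1/2) ^ (r+1) * G 1 ^ (p+1))) • E (r+p) := by
    have h1 : ∀ m ∈ range (n+1), ∑ r ∈ range m, ∑ p ∈ range (n-m),
          ((w 0 (r+1) m - w (1/2) (r+1) m) * w 1 (p+1) (n-m)) • E (r+p)
        = ∑ r ∈ range n, ∑ p ∈ range n,
          ((w 0 (r+1) m - w (1/2) (r+1) m) * w 1 (p+1) (n-m)) • E (r+p) := by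
      intro m hm
      simp only [mem_range] at hm
      have h2 : ∀ r ∈ range m, ∑ p ∈ range (n-m),
            ((w 0 (r+1) m - w (1/2) (r+1) m) * w 1 (p+1) (n-m)) • E (r+p)
          = ∑ p ∈ range n,
            ((w 0 (r+1) m - w (1/2) (r+1) m) * w 1 (p+1) (n-m)) • E (r+p) := by
        intro r _
        refine sum_range_extend _ _ _ (by omega) fun p hp => ?_
        rw [w_zero 1 (by omega), mul_zero, zero_smul]
      rw [sum_congr rfl h2]
      refine sum_range_extend _ _ _ (by omega) fun r hr => ?_
      refine sum_eq_zero fun p _ => ?_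
      rw [w_zero 0 (by omega), w_zero (1/2) (by omega), sub_self, zero_mul, zero_smul]
    rw [sum_congr rfl h1, sum_comm]
    refine sum_congr rfl fun r _ => ?_
    rw [sum_comm]
    refine sum_congr rfl fun p _ => ?_
    rw [← sum_smul]
    congr 1
    rw [coeffGG, coeffGG, ← sum_sub_distrib]
    exact sum_congr rfl fun m _ => by ring
  rw [lhs_eq]
  have rhs_eq : ∀ K ∈ range n, (2 * w (1/2) (K+1) n - w 1 (K+1) n - w 0 (K+1) n) • E K
      = ∑ r ∈ range (K+1),
          (coeff (R := ℚ) n (G 0 ^ (r+1) * G 1 ^ ((K-r)+1))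
            - coeff (R := ℚ) n (G (1/2) ^ (r+1) * G 1 ^ ((K-r)+1))) • E (r + (K-r)) := by
    intro K hK
    have h3 := congrArg (coeff (R := ℚ) n) (Eprime K)
    rw [map_sum] at h3
    have h4 : ∀ r ∈ range (K+1),
        coeff (R := ℚ) n ((G 0 ^ (r+1) - G (1/2) ^ (r+1)) * G 1 ^ (K - r + 1))
          = coeff (R := ℚ) n (G 0 ^ (r+1) * G 1 ^ ((K-r)+1))
            - coeff (R := ℚ) n (G (1/2) ^ (r+1) * G 1 ^ ((K-r)+1)) := by
      intro r _
      rw [sub_mul, map_sub]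
    rw [sum_congr rfl h4] at h3
    have h5 : coeff (R := ℚ) n (C (R := ℚ) 2 * G (1/2) ^ (K+1) - G 1 ^ (K+1) - G 0 ^ (K+1))
        = 2 * w (1/2) (K+1) n - w 1 (K+1) n - w 0 (K+1) n := by
      rw [map_sub, map_sub, coeff_C_mul, w_eq, w_eq, w_eq]
    rw [h5] at h3
    rw [← h3, sum_smul]
    exact sum_congr rfl fun r hr => by
      simp only [mem_range] at hr
      rw [show r + (K - r) = K by omega]
  rw [sum_congr rfl rhs_eq,
    tri (fun r p => (coeff (R := ℚ) n (G 0 ^ (r+1) * G 1 ^ (p+1))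
      - coeff (R := ℚ) n (G (1/2) ^ (r+1) * G 1 ^ (p+1))) • E (r + p)) n]
  refine sum_congr rfl fun r hr => ?_
  refine (sum_range_extend _ _ _ (by omega) fun p hp => ?_).symm
  rw [GGzero 0 1 (by omega), GGzero (1/2) 1 (by omega), sub_self, zero_smul]

lemma gform (e : ℕ → A) {s : ℕ} (hs : 1 ≤ s) (c : ℚ) (n : ℕ) :
    shiftC (-c) (fun r => dd e r s) n = -∑ i ∈ range n, w c (i+1) n • e (i+s) := by
  rw [shiftC, sum_range_succ']
  have h0 : (((-1 : ℚ) ^ (n - 0)) * ((n - 1).choose (n - 0) : ℚ) * (-c) ^ (n - 0)) • dd e 0 s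
      = 0 := by
    rw [dd, if_pos (Or.inl rfl), smul_zero]
  rw [h0, add_zero]
  have h1 : ∀ i ∈ range n,
      (((-1 : ℚ) ^ (n - (i+1))) * ((n - 1).choose (n - (i+1)) : ℚ) * (-c) ^ (n - (i+1))) • dd e (i+1) s
        = -(w c (i+1) n • e (i+s)) := by
    intro i hi
    simp only [mem_range] at hi
    rw [dd, if_neg (by omega), show i+1+s-1 = i+s by omega, smul_neg, w, if_pos (by omega)]
    congr 2
    have hkk : ((-1:ℚ)) ^ (n-(i+1)) * ((-1:ℚ)) ^ (n-(i+1)) = 1 := by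
      rw [← pow_add]
      exact Even.neg_one_pow ⟨n-(i+1), rfl⟩
    rw [neg_pow]
    linear_combination (((n - 1).choose (n - (i+1)) : ℚ) * c ^ (n - (i+1))) * hkk
  rw [sum_congr rfl h1, ← sum_neg_distrib]

lemma ddform (e : ℕ → A) {s : ℕ} (hs : 1 ≤ s) (n : ℕ) :
    dd e n s = -∑ i ∈ range n, w 0 (i+1) n • e (i+s) := by
  rw [← gform e hs 0 n, neg_zero, shiftC]
  rw [sum_eq_single n]
  · simp
  · intro r hr hrn
    simp only [mem_range] at hr
    rw [zero_pow (by omega : n - r ≠ 0), mul_zero, zero_smul]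
  · intro h
    simp at h

lemma Mconvo (a b : ℕ → A) :
    PowerSeries.mk (convo a b) = PowerSeries.mk a * PowerSeries.mk b := by
  ext n
  rw [coeff_mk, coeff_mul_range, convo]
  exact sum_congr rfl fun i _ => by rw [coeff_mk, coeff_mk]

lemma mkzero : PowerSeries.mk (fun _ => (0:A)) = 0 := by
  ext n; simp

lemma mainSeries (h1 e z hm1inv h2 : ℕ → A)
    (hzc : ∀ n a, z n * a = a * z n)
    (hinv1 : ∀ n, convo (shiftC (-1) h1) hm1inv n = if n = 0 then 1 else 0)
    (hinv2 : ∀ n, convo hm1inv (shiftC (-1) h1) n = if n = 0 then 1 else 0)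
    (hh2 : ∀ n, h2 n = convo z (convo (shiftC (-(1 / 2)) h1) hm1inv) n)
    (rel : ∀ r s, h1 r * e s - e s * h1 r
      = ∑ i ∈ range (r + 1), h1 i * dd e (r - i) s) (s : ℕ) :
    PowerSeries.mk h2 * C (R := A) (e s) - C (R := A) (e s) * PowerSeries.mk h2
      = PowerSeries.mk h2 *
          (PowerSeries.mk (fun j => dd e j s)
            - PowerSeries.mk (shiftC (-(1 / 2)) (fun a => dd e a s))) := by
  set H : PowerSeries A := PowerSeries.mk h1 with hH
  set Hm : PowerSeries A := PowerSeries.mk hm1inv with hHm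
  set Z : PowerSeries A := PowerSeries.mk z with hZdef
  set Xx : PowerSeries A := PowerSeries.mk (shiftC (-1) h1) with hXx
  set Y : PowerSeries A := PowerSeries.mk (shiftC (-(1 / 2)) h1) with hY
  set D : PowerSeries A := PowerSeries.mk (fun j => dd e j s) with hD
  set Dh : PowerSeries A := PowerSeries.mk (shiftC (-(1 / 2)) (fun a => dd e a s)) with hDh
  set Do : PowerSeries A := PowerSeries.mk (shiftC (-1) (fun a => dd e a s)) with hDo
  -- inverses
  have fXHm : Xx * Hm = 1 := by
    rw [hXx, hHm, ← Mconvo]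
    ext n
    rw [coeff_mk, hinv1 n, coeff_one]
  have fHmX : Hm * Xx = 1 := by
    rw [hXx, hHm, ← Mconvo]
    ext n
    rw [coeff_mk, hinv2 n, coeff_one]
  -- centrality of z
  have fZ : ∀ φ : PowerSeries A, Z * φ = φ * Z := by
    intro φ
    ext n
    rw [coeff_mul_range, coeff_mul_range]
    calc ∑ i ∈ range (n+1), coeff (R := A) i Z * coeff (R := A) (n-i) φ
        = ∑ i ∈ range (n+1), coeff (R := A) (n-i) φ * coeff (R := A) i Z :=
          sum_congr rfl fun i _ => by rw [hZdef, coeff_mk]; exact hzc i _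
      _ = ∑ i ∈ range (n+1), coeff (R := A) i φ * coeff (R := A) (n-i) Z := by
          rw [← Finset.sum_range_reflect]
          refine sum_congr rfl fun i hi => ?_
          simp only [mem_range] at hi
          rw [show n+1-1-i = n-i by omega, show n-(n-i) = i by omega]
  -- the basic relation, series form
  have relS : ∀ k, H * C (R := A) (e k) - C (R := A) (e k) * H
      = H * PowerSeries.mk (fun j => dd e j k) := by
    intro k
    ext n
    rw [map_sub]
    have l1 : coeff (R := A) n (H * C (R := A) (e k)) = h1 n * e k := by
      simp [hH]
    have l2 : coeff (R := A) n (C (R := A) (e k) * H) = e k * h1 n := by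
      simp [hH]
    rw [l1, l2, coeff_mul_range, rel n k]
    exact sum_congr rfl fun i _ => by rw [hH, coeff_mk, coeff_mk]
  -- shifted relations
  have relSh : ∀ (q : ℚ) (k : ℕ),
      PowerSeries.mk (shiftC q h1) * C (R := A) (e k) - C (R := A) (e k) * PowerSeries.mk (shiftC q h1)
        = PowerSeries.mk (shiftC q h1) * PowerSeries.mk (shiftC q (fun j => dd e j k)) := by
    intro q k
    have h := congrArg (Sh q) (relS k)
    rw [Sh_sub, Sh_mul, Sh_mul, Sh_mul, Sh_C, hH, Sh_mk, Sh_mk] at h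
    exact h
  -- the key identity
  have star : Xx * (Dh - Do) = (D - Dh) * Xx := by
    rcases Nat.eq_zero_or_pos s with hs | hs
    · have hdd : (fun j => dd e j s) = fun _ => (0:A) := by
        funext j; rw [dd, if_pos (Or.inr hs)]
      have hzD : D = 0 := by rw [hD, hdd, mkzero]
      have hsh : ∀ c : ℚ, PowerSeries.mk (shiftC c (fun a => dd e a s)) = 0 := by
        intro c
        rw [hdd]
        have : shiftC c (fun _ => (0:A)) = fun _ => (0:A) := by
          funext n; rw [shiftC]; simp
        rw [this, mkzero]
      have hzDh : Dh = 0 := by rw [hDh, hsh]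
      have hzDo : Do = 0 := by rw [hDo, hsh]
      rw [hzD, hzDh, hzDo]
      simp
    · -- s ≥ 1
      set E : ℕ → A := fun K => e (K + s) with hE
      set DDf : ℕ → PowerSeries A :=
        fun k => PowerSeries.mk (shiftC (-1) (fun j => dd e j (k+s))) with hDDf
      have hrel : ∀ k, Xx * C (R := A) (E k) - C (R := A) (E k) * Xx = Xx * DDf k := by
        intro k
        simp only [hXx, hE, hDDf]
        exact relSh (-1) (k+s)
      have mkform : ∀ c : ℚ, PowerSeries.mk (fun n => ∑ r ∈ range n, (-(w c (r+1) n)) • E r)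
          = PowerSeries.mk (shiftC (-c) (fun a => dd e a s)) := by
        intro c
        ext n
        rw [coeff_mk, coeff_mk, gform e hs c n, ← sum_neg_distrib]
        exact sum_congr rfl fun i _ => by rw [neg_smul]
      have e0 := commGen Xx E DDf (fun m r => -(w 0 (r+1) m)) hrel
      have eh := commGen Xx E DDf (fun m r => -(w (1/2) (r+1) m)) hrel
      have m0 : PowerSeries.mk (fun n => ∑ r ∈ range n, (-(w 0 (r+1) n)) • E r) = D := by
        rw [mkform 0, hD]
        ext n
        rw [coeff_mk, coeff_mk, neg_zero, shiftC, sum_eq_single n]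
        · simp
        · intro r hr hrn
          simp only [mem_range] at hr
          rw [zero_pow (by omega : n - r ≠ 0), mul_zero, zero_smul]
        · intro h; simp at h
      have mh : PowerSeries.mk (fun n => ∑ r ∈ range n, (-(w (1/2) (r+1) n)) • E r) = Dh := by
        rw [mkform (1/2), hDh]
      rw [m0] at e0
      rw [mh] at eh
      -- the vanishing combination
      have zeroSer :
          PowerSeries.mk (fun j => ∑ m ∈ range (j+1), ∑ r ∈ range m,
              (-(w 0 (r+1) m)) • coeff (R := A) (j-m) (DDf r))
            - PowerSeries.mk (fun j => ∑ m ∈ range (j+1), ∑ r ∈ range m,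
              (-(w (1/2) (r+1) m)) • coeff (R := A) (j-m) (DDf r))
            + Dh + Dh - Do - D = 0 := by
        ext n
        simp only [map_add, map_sub, coeff_mk, map_zero]
        have hDD : ∀ r j : ℕ, coeff (R := A) j (DDf r)
            = -∑ p ∈ range j, w 1 (p+1) j • e (p+(r+s)) := by
          intro r j
          simp only [hDDf]
          rw [coeff_mk, gform e (show 1 ≤ r+s by omega) 1 j]
        have hq : (∑ m ∈ range (n+1), ∑ r ∈ range m,
              (-(w 0 (r+1) m)) • coeff (R := A) (n-m) (DDf r))
            - (∑ m ∈ range (n+1), ∑ r ∈ range m,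
              (-(w (1/2) (r+1) m)) • coeff (R := A) (n-m) (DDf r))
            = ∑ K ∈ range n,
                (2 * w (1/2) (K+1) n - w 1 (K+1) n - w 0 (K+1) n) • e (K+s) := by
          rw [← sum_sub_distrib]
          have h1 : ∀ m ∈ range (n+1),
              (∑ r ∈ range m, (-(w 0 (r+1) m)) • coeff (R := A) (n-m) (DDf r))
                - ∑ r ∈ range m, (-(w (1/2) (r+1) m)) • coeff (R := A) (n-m) (DDf r)
              = ∑ r ∈ range m, ∑ p ∈ range (n-m),
                  ((w 0 (r+1) m - w (1/2) (r+1) m) * w 1 (p+1) (n-m)) • e (r+p+s) := by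
            intro m hm
            rw [← sum_sub_distrib]
            refine sum_congr rfl fun r hr => ?_
            rw [hDD r (n-m), smul_neg, smul_neg, neg_smul, neg_smul, neg_neg, neg_neg,
              ← sub_smul, smul_sum]
            refine sum_congr rfl fun p hp => ?_
            rw [smul_smul, show p + (r+s) = r+p+s by omega]
          rw [sum_congr rfl h1]
          have hqd := qdiff (A := A) (fun K => e (K + s)) n
          simpa using hqd
        rw [hq, hDh, hDo, hD, coeff_mk, coeff_mk, coeff_mk,
          gform e hs (1/2) n, gform e hs 1 n, ddform e hs n]
        have combine : ∀ K ∈ range n,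
            (2 * w (1/2) (K+1) n - w 1 (K+1) n - w 0 (K+1) n) • e (K+s)
              = w (1/2) (K+1) n • e (K+s) + w (1/2) (K+1) n • e (K+s)
                - w 1 (K+1) n • e (K+s) - w 0 (K+1) n • e (K+s) := by
          intro K _
          rw [sub_smul, sub_smul, two_mul, add_smul]
        rw [sum_congr rfl combine]
        simp only [sum_add_distrib, sum_sub_distrib]
        abel
      have hDx : D * Xx = Xx * D - Xx * PowerSeries.mk (fun j => ∑ m ∈ range (j+1),
          ∑ r ∈ range m, (-(w 0 (r+1) m)) • coeff (R := A) (j-m) (DDf r)) := by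
        rw [e0]; abel
      have hDhx : Dh * Xx = Xx * Dh - Xx * PowerSeries.mk (fun j => ∑ m ∈ range (j+1),
          ∑ r ∈ range m, (-(w (1/2) (r+1) m)) • coeff (R := A) (j-m) (DDf r)) := by
        rw [eh]; abel
      have key : Xx * (Dh - Do) - (D - Dh) * Xx
          = Xx * (PowerSeries.mk (fun j => ∑ m ∈ range (j+1), ∑ r ∈ range m,
              (-(w 0 (r+1) m)) • coeff (R := A) (j-m) (DDf r))
            - PowerSeries.mk (fun j => ∑ m ∈ range (j+1), ∑ r ∈ range m,
              (-(w (1/2) (r+1) m)) • coeff (R := A) (j-m) (DDf r))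
            + Dh + Dh - Do - D) := by
        rw [sub_mul, hDx, hDhx]
        simp only [mul_sub, mul_add]
        abel
      rw [zeroSer, mul_zero] at key
      exact sub_eq_zero.mp key
  -- inverse-conjugated key identity
  have starHm : (Dh - Do) * Hm = Hm * (D - Dh) := by
    calc (Dh - Do) * Hm = (Hm * Xx) * ((Dh - Do) * Hm) := by rw [fHmX, one_mul]
      _ = Hm * ((Xx * (Dh - Do)) * Hm) := by rw [mul_assoc Hm Xx, ← mul_assoc Xx]
      _ = Hm * (((D - Dh) * Xx) * Hm) := by rw [star]
      _ = Hm * ((D - Dh) * (Xx * Hm)) := by rw [mul_assoc (D - Dh)]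
      _ = Hm * (D - Dh) := by rw [fXHm, mul_one]
  -- commutator with Hm
  have relXs := relSh (-1) s
  rw [← hXx, ← hDo] at relXs
  have hmC : Hm * C (R := A) (e s) - C (R := A) (e s) * Hm = -(Do * Hm) := by
    have h1' : Hm * (Xx * C (R := A) (e s) - C (R := A) (e s) * Xx) * Hm
        = C (R := A) (e s) * Hm - Hm * C (R := A) (e s) := by
      rw [mul_sub, sub_mul]
      congr 1
      · rw [← mul_assoc, fHmX, one_mul]
      · rw [← mul_assoc, mul_assoc (Hm * C (R := A) (e s)), fXHm, mul_one]
    have h2' : Hm * (Xx * Do) * Hm = Do * Hm := by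
      rw [← mul_assoc, fHmX, one_mul]
    have h3' : C (R := A) (e s) * Hm - Hm * C (R := A) (e s) = Do * Hm := by
      rw [← h1', relXs, h2']
    rw [← h3', neg_sub]
  -- commutator with Y
  have relYs := relSh (-(1/2)) s
  rw [← hY, ← hDh] at relYs
  have yhm : (Y * Hm) * C (R := A) (e s) - C (R := A) (e s) * (Y * Hm) = Y * (Hm * (D - Dh)) := by
    have expand : (Y * Hm) * C (R := A) (e s) - C (R := A) (e s) * (Y * Hm)
        = Y * (Hm * C (R := A) (e s) - C (R := A) (e s) * Hm) + (Y * C (R := A) (e s) - C (R := A) (e s) * Y) * Hm := by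
      simp only [mul_sub, sub_mul, mul_assoc]
      abel
    rw [expand, hmC, relYs, ← starHm]
    simp only [mul_neg, sub_mul, mul_sub, mul_assoc]
    abel
  -- h2 series
  have H2eq : PowerSeries.mk h2 = Z * (Y * Hm) := by
    rw [hZdef, hY, hHm, ← Mconvo, ← Mconvo]
    ext n
    rw [coeff_mk, coeff_mk, hh2 n]
  have zmove : C (R := A) (e s) * (Z * (Y * Hm)) = Z * (C (R := A) (e s) * (Y * Hm)) := by
    rw [fZ (Y * Hm), ← mul_assoc, ← fZ]
  calc PowerSeries.mk h2 * C (R := A) (e s) - C (R := A) (e s) * PowerSeries.mk h2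
      = Z * ((Y * Hm) * C (R := A) (e s)) - Z * (C (R := A) (e s) * (Y * Hm)) := by
        rw [H2eq, mul_assoc, zmove]
    _ = Z * ((Y * Hm) * C (R := A) (e s) - C (R := A) (e s) * (Y * Hm)) := by rw [mul_sub]
    _ = Z * (Y * (Hm * (D - Dh))) := by rw [yhm]
    _ = PowerSeries.mk h2 * (D - Dh) := by
        rw [H2eq]
        simp only [mul_assoc]

end Stmt3Aux

/-- If `h₁(u)` and `e(u)` satisfy
`[h₁(u), e(v)] = h₁(u)(e(u)-e(v))/(u-v)` and
`h₂(u) = z(u)·h₁(u-1/2)·h₁(u-1)^{-1}` with `z(u)` having central coefficients, then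
`[h₂(u), e(v)] = h₂(u)·((e(u)-e(v))/(u-v) - (e(u-1/2)-e(v))/(u-v-1/2))`.
Here `hm1inv` encodes `h₁(u-1)^{-1}` and `(e(u-1/2)-e(v))/(u-v-1/2)` is the
substitution `u ↦ u - 1/2` (in the first variable) of `(e(u)-e(v))/(u-v)`. -/
theorem stmt3 {A : Type*} [Ring A] [Algebra ℚ A]
    (h1 e z hm1inv h2 : ℕ → A)
    (hh0 : h1 0 = 1) (he0 : e 0 = 0) (hz0 : z 0 = 1)
    (hzc : ∀ n a, z n * a = a * z n)
    (hinv1 : ∀ n, convo (shiftC (-1) h1) hm1inv n = if n = 0 then 1 else 0)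
    (hinv2 : ∀ n, convo hm1inv (shiftC (-1) h1) n = if n = 0 then 1 else 0)
    (hh2 : ∀ n, h2 n = convo z (convo (shiftC (-(1 / 2)) h1) hm1inv) n)
    (rel : ∀ r s, h1 r * e s - e s * h1 r
      = ∑ i ∈ range (r + 1), h1 i * dd e (r - i) s) :
    ∀ r s, h2 r * e s - e s * h2 r
      = ∑ i ∈ range (r + 1), h2 i *
          (dd e (r - i) s - shiftC (-(1 / 2)) (fun a => dd e a s) (r - i)) := by
  intro r s
  have main := Stmt3Aux.mainSeries h1 e z hm1inv h2 hzc hinv1 hinv2 hh2 rel s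
  have hc := congrArg (PowerSeries.coeff (R := A) r) main
  rw [map_sub] at hc
  have l1 : PowerSeries.coeff (R := A) r (PowerSeries.mk h2 * PowerSeries.C (R := A) (e s))
      = h2 r * e s := by simp
  have l2 : PowerSeries.coeff (R := A) r (PowerSeries.C (R := A) (e s) * PowerSeries.mk h2)
      = e s * h2 r := by simp
  rw [l1, l2, Stmt3Aux.coeff_mul_range] at hc
  rw [hc]
  refine sum_congr rfl fun i _ => ?_
  rw [map_sub, PowerSeries.coeff_mk, PowerSeries.coeff_mk, PowerSeries.coeff_mk]
end

section
/- Let A be an associative superalgebra and let e(u) = Σ_{r≥1} e^{(r)} u^{-r} be a formal series of odd elements, and e₁₁'(u) = Σ_{r≥1} e₁₁'^{(r)} u^{-r} a series of even elements, satisfying the relation e₁₁'(u) - e₁₁'(v) = ((u-v+1/2)(u-v-1)/(u-v))·e(u)e(v) + ((u-v-1/2)(u-v+1)/(u-v))·e(v)e(u) - ((u-v-1/2)/(u-v))·e(u)² + ((u-v+1/2)/(u-v))·e(v)². Then by taking the coefficient of v⁰ one obtains e₁₁'(u) = -e(u)² - [e^{(1)}, e(u)], where [a,b] = ab - ba·(-1)^{p(a)p(b)}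 is the supercommutator (here [e^{(1)},e(u)] = e^{(1)}e(u) + e(u)e^{(1)}). -/
open Finset

/-- Coefficient of `u^{-r}v^{-s}` in `(u - v)·X(u,v)`. -/
noncomputable def mulw {A : Type*} [Ring A] (X : ℕ → ℕ → A) (r s : ℕ) : A :=
  X (r + 1) s - X r (s + 1)

/-- Coefficient of `u^{-r}v^{-s}` in `(1/(u - v))·X(u,v)`, expanding
`1/(u-v) = Σ_{k≥0} v^k u^{-k-1}`. -/
noncomputable def divw {A : Type*} [Ring A] (X : ℕ → ℕ → A) (r s : ℕ) : A :=
  ∑ k ∈ range r, X (r - 1 - k) (s + k)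

/-- Let `e(u) = Σ_{r≥1} e^{(r)} u^{-r}` be a series of odd elements and
`e₁₁'(u) = Σ_{r≥1} e₁₁'^{(r)} u^{-r}` a series of even elements of an associative
superalgebra satisfying
`e₁₁'(u) - e₁₁'(v)
  = ((u-v+1/2)(u-v-1)/(u-v))·e(u)e(v) + ((u-v-1/2)(u-v+1)/(u-v))·e(v)e(u)
    - ((u-v-1/2)/(u-v))·e(u)² + ((u-v+1/2)/(u-v))·e(v)²`.
(The rational prefactors are expanded via `(w+1/2)(w-1)/w = w - 1/2 - (1/2)/w`,
`(w-1/2)(w+1)/w = w + 1/2 - (1/2)/w`, `(w-1/2)/w = 1 - (1/2)/w`,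
`(w+1/2)/w = 1 + (1/2)/w` for `w = u - v`, and coefficients are extracted with
`mulw` and `divw`.)  Then taking the coefficient of `v⁰` yields
`e₁₁'(u) = -e(u)² - [e^{(1)}, e(u)]`, the supercommutator of two odd elements being
the anticommutator. -/
theorem stmt4 {A : Type*} [Ring A] [Algebra ℚ A]
    (e E11 : ℕ → A) (he0 : e 0 = 0) (hE0 : E11 0 = 0)
    (hyp : ∀ r s,
      (if s = 0 then E11 r else 0) - (if r = 0 then E11 s else 0)
        = (mulw (fun a b => e a * e b) r s
            - (1 / 2 : ℚ) • (e r * e s)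
            - (1 / 2 : ℚ) • divw (fun a b => e a * e b) r s)
          + (mulw (fun a b => e b * e a) r s
            + (1 / 2 : ℚ) • (e s * e r)
            - (1 / 2 : ℚ) • divw (fun a b => e b * e a) r s)
          - ((if s = 0 then convo e e r else 0)
            - (1 / 2 : ℚ) • divw (fun a b => if b = 0 then convo e e a else 0) r s)
          + ((if r = 0 then convo e e s else 0)
            + (1 / 2 : ℚ) • divw (fun a b => if a = 0 then convo e e b else 0) r s)) :
    ∀ n, E11 n = -convo e e n - (e 1 * e n + e n * e 1) := by

  intro n
  cases n with
  | zero => simp [hE0, convo, he0]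
  | succ m =>
    have h := hyp (m + 1) 0
    simp only [if_pos rfl, Nat.succ_ne_zero, if_neg, reduceIte, sub_zero, mulw, divw,
      Nat.add_sub_cancel, zero_add, he0, mul_zero, zero_mul, smul_zero, sub_zero,
      add_zero] at h
    have h1 : ∑ k ∈ range (m + 1), e (m - k) * e k
        = ∑ k ∈ range (m + 1), e k * e (m - k) := by
      rw [← Finset.sum_range_reflect]
      refine Finset.sum_congr rfl fun k hk => ?_
      rw [Finset.mem_range] at hk
      congr 2; omega
    have h3 : ∑ k ∈ range (m + 1),
        (if k = 0 then convo e e (m - k) else 0) = convo e e m := by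
      rw [Finset.sum_ite_eq' (range (m + 1)) 0 (fun k => convo e e (m - k))]
      simp
    have h4 : ∑ k ∈ range (m + 1),
        (if m - k = 0 then convo e e k else 0) = convo e e m := by
      rw [Finset.sum_eq_single m]
      · simp
      · intro k hk hkm
        rw [Finset.mem_range] at hk
        rw [if_neg (by omega)]
      · simp
    have hc : convo e e m = ∑ k ∈ range (m + 1), e k * e (m - k) := rfl
    rw [h1, h3, h4, hc] at h
    rw [h, convo]
    abel
end
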